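/- Column-restricted equivalence operations preserve pairs of rows: if two rows of a balanced complex orthogonal design (BCOD) with 2m columns form a pair, then after applying any finite sequence of column-restricted equivalence operations, the images of these two rows again form a pair. -/

import Mathlib

open Matrix

/-- A formal entry of a complex orthogonal design: either `0`, or `± z_i`, or `± z_i^*`.
Here `sign = true` means sign `+1`, and `conj = true` means the conjugated symbol `z_i^*`. -/
inductive CODEntry (k : ℕ) : Type where
  | zero : CODEntry k
  | var (sign : Bool) (conj : Bool) (idx : Fin k) : CODEntry k
deriving DecidableEq

namespace CODEntry

variable {k k' : ℕ}

/-- Evaluate a formal entry at an assignment of complex values to the indeterminates. -/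
def eval (z : Fin k → ℂ) : CODEntry k → ℂ
  | zero => 0
  | var s c i => (if s then (1 : ℂ) else -1) * (if c then (starRingEnd ℂ) (z i) else z i)

/-- Formal negation of an entry. -/
def neg : CODEntry k → CODEntry k
  | zero => zero
  | var s c i => var (!s) c i

/-- Formal conjugation of an entry (with `0^* = 0`). -/
def conj : CODEntry k → CODEntry k
  | zero => zero
  | var s c i => var s (!c) i

/-- Optionally negate an entry. -/
def negIf (b : Bool) (e : CODEntry k) : CODEntry k := if b then e.neg else e

/-- Rename variables according to a permutation of the indices. -/
def rename (σ : Equiv.Perm (Fin k)) : CODEntry k → CODEntry k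
  | zero => zero
  | var s c i => var s c (σ i)

/-- Negate all instances of the variable `z_j`. -/
def negVar (j : Fin k) : CODEntry k → CODEntry k
  | zero => zero
  | var s c i => if i = j then var (!s) c i else var s c i

/-- Conjugate all instances of the variable `z_j` (swap `z_j ↔ z_j^*`). -/
def conjVar (j : Fin k) : CODEntry k → CODEntry k
  | zero => zero
  | var s c i => if i = j then var s (!c) i else var s c i

/-- Transport an entry along a map of variable index sets. -/
def mapIdx (f : Fin k → Fin k') : CODEntry k → CODEntry k'
  | zero => zero
  | var s c i => var s c (f i)

/-- Whether a (nonzero) entry is a conjugated symbol `± z_i^*`. -/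
def isConj : CODEntry k → Bool
  | zero => false
  | var _ c _ => c

/-- The index of the variable occurring in an entry, if any. -/
def index : CODEntry k → Option (Fin k)
  | zero => none
  | var _ _ i => some i

end CODEntry

/-- `G` is a `[p, n, k]` complex orthogonal design (COD): for every assignment of complex
values to the indeterminates, `Gᴴ * G = (|z_1|² + … + |z_k|²) • I_n`. -/
def IsCOD {p n k : ℕ} (G : Matrix (Fin p) (Fin n) (CODEntry k)) : Prop :=
  ∀ z : Fin k → ℂ,
    (G.map (CODEntry.eval z))ᴴ * (G.map (CODEntry.eval z)) =
      ((∑ i, Complex.normSq (z i) : ℝ) : ℂ) • (1 : Matrix (Fin n) (Fin n) ℂ)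

/-- The equivalence operations on `[p, n, k]` CODs. -/
inductive EquivOp (p n k : ℕ) : Type where
  | rowPerm (σ : Equiv.Perm (Fin p))
  | rowNeg (r : Fin p)
  | colPerm (σ : Equiv.Perm (Fin n))
  | colNeg (c : Fin n)
  | varRename (σ : Equiv.Perm (Fin k))
  | varNeg (i : Fin k)
  | varConj (i : Fin k)

namespace EquivOp

variable {p n k : ℕ}

/-- Apply an equivalence operation to a matrix of formal entries. -/
def apply (G : Matrix (Fin p) (Fin n) (CODEntry k)) :
    EquivOp p n k → Matrix (Fin p) (Fin n) (CODEntry k)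
  | rowPerm σ => fun r c => G (σ r) c
  | rowNeg r₀ => fun r c => if r = r₀ then (G r c).neg else G r c
  | colPerm σ => fun r c => G r (σ c)
  | colNeg c₀ => fun r c => if c = c₀ then (G r c).neg else G r c
  | varRename σ => fun r c => (G r c).rename σ
  | varNeg i => fun r c => (G r c).negVar i
  | varConj i => fun r c => (G r c).conjVar i

/-- The operation is a column permutation. -/
def IsColPerm : EquivOp p n k → Prop
  | colPerm _ => True
  | _ => False

/-- The operation is a column negation. -/
def IsColNeg : EquivOp p n k → Prop
  | colNeg _ => True
  | _ => False

/-- The operation is a variable renaming. -/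
def IsVarRename : EquivOp p n k → Prop
  | varRename _ => True
  | _ => False

/-- Where each row of the original matrix is sent by the operation. -/
def rowMap : EquivOp p n k → Equiv.Perm (Fin p)
  | rowPerm σ => σ⁻¹
  | _ => 1

end EquivOp

/-- Apply a finite sequence of equivalence operations, in order. -/
def applyOps {p n k : ℕ} (G : Matrix (Fin p) (Fin n) (CODEntry k))
    (ops : List (EquivOp p n k)) : Matrix (Fin p) (Fin n) (CODEntry k) :=
  ops.foldl EquivOp.apply G

/-- Where each row of the original matrix is sent by a sequence of operations. -/
def opsRowMap {p n k : ℕ} (ops : List (EquivOp p n k)) : Equiv.Perm (Fin p) :=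
  ops.foldl (fun τ op => op.rowMap * τ) 1

/-- An operation on a COD with `m + m` columns is column-restricted if, in case it is a
column permutation, it is the transposition of columns `i` and `m + i` for some `i`. -/
def EquivOp.ColumnRestricted {p m k : ℕ} : EquivOp p (m + m) k → Prop
  | .colPerm σ => ∃ i : Fin m, σ = Equiv.swap (Fin.castAdd m i) (Fin.natAdd m i)
  | _ => True

/-- `G` contains the `B_i` form submatrix on the `2m` rows selected by the embedding `f`:
the block matrix `((z_i I_m, M), (−Mᴴ, z_i^* I_m))` where `M` is the top-right block. -/
def ContainsBFormWith {p m k : ℕ} (G : Matrix (Fin p) (Fin (m + m)) (CODEntry k))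
    (i : Fin k) (f : Fin (m + m) ↪ Fin p) : Prop :=
  (∀ r s : Fin m, G (f (Fin.castAdd m r)) (Fin.castAdd m s) =
      if r = s then CODEntry.var true false i else CODEntry.zero) ∧
  (∀ r s : Fin m, G (f (Fin.natAdd m r)) (Fin.natAdd m s) =
      if r = s then CODEntry.var true true i else CODEntry.zero) ∧
  (∀ r s : Fin m, G (f (Fin.natAdd m r)) (Fin.castAdd m s) =
      ((G (f (Fin.castAdd m s)) (Fin.natAdd m r)).conj).neg)

/-- As `ContainsBFormWith`, and moreover the top-right block `M` is (formally)
skew-symmetric: `Mᵀ = −M`. -/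
def ContainsSkewBFormWith {p m k : ℕ} (G : Matrix (Fin p) (Fin (m + m)) (CODEntry k))
    (i : Fin k) (f : Fin (m + m) ↪ Fin p) : Prop :=
  ContainsBFormWith G i f ∧
  ∀ r s : Fin m, G (f (Fin.castAdd m s)) (Fin.natAdd m r) =
    (G (f (Fin.castAdd m r)) (Fin.natAdd m s)).neg

/-- `G` is in `B_i` form: after equivalence operations excluding column permutations
(and not renaming variables), it contains the `B_i` form submatrix. -/
def InBForm {p m k : ℕ} (G : Matrix (Fin p) (Fin (m + m)) (CODEntry k)) (i : Fin k) : Prop :=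
  ∃ ops : List (EquivOp p (m + m) k),
    (∀ op ∈ ops, ¬ op.IsColPerm ∧ ¬ op.IsVarRename) ∧
    ∃ f, ContainsBFormWith (applyOps G ops) i f

/-- `G` is in `B_i` form with skew-symmetric block `M_i`. -/
def InSkewBForm {p m k : ℕ} (G : Matrix (Fin p) (Fin (m + m)) (CODEntry k)) (i : Fin k) : Prop :=
  ∃ ops : List (EquivOp p (m + m) k),
    (∀ op ∈ ops, ¬ op.IsColPerm ∧ ¬ op.IsVarRename) ∧
    ∃ f, ContainsSkewBFormWith (applyOps G ops) i f

/-- `G` is a balanced complex orthogonal design (BCOD) with `2m` columns: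
a COD in which every row has exactly `m` zero entries (hence `m` nonzero ones),
every row is conjugation-separated, and for each variable `z_j` it is in `B_j` form
with skew-symmetric block `M_j`. -/
def IsBCOD {p m k : ℕ} (G : Matrix (Fin p) (Fin (m + m)) (CODEntry k)) : Prop :=
  IsCOD G ∧
  (∀ r : Fin p, (Finset.univ.filter fun c => G r c = CODEntry.zero).card = m) ∧
  (∀ r : Fin p,
      (∀ c, G r c ≠ CODEntry.zero → (G r c).isConj = true) ∨
      (∀ c, G r c ≠ CODEntry.zero → (G r c).isConj = false)) ∧
  (∀ j : Fin k, InSkewBForm G j)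

/-- `G` is the direct sum of `G₁` (on top) and `G₂` (below), where `G₁` and `G₂` use
disjoint sets of indeterminates, embedded into `Fin k` via `ι₁` and `ι₂`. -/
def IsDirectSumOf {p n k p₁ p₂ k₁ k₂ : ℕ} (hp : p = p₁ + p₂)
    (G : Matrix (Fin p) (Fin n) (CODEntry k))
    (G₁ : Matrix (Fin p₁) (Fin n) (CODEntry k₁))
    (G₂ : Matrix (Fin p₂) (Fin n) (CODEntry k₂))
    (ι₁ : Fin k₁ ↪ Fin k) (ι₂ : Fin k₂ ↪ Fin k) : Prop :=
  k = k₁ + k₂ ∧ (∀ a b, ι₁ a ≠ ι₂ b) ∧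
  ∀ (r : Fin p) (c : Fin n),
    if h : (r : ℕ) < p₁ then G r c = (G₁ ⟨(r : ℕ), h⟩ c).mapIdx (fun i => ι₁ i)
    else G r c = (G₂ ⟨(r : ℕ) - p₁, by have := r.isLt; omega⟩ c).mapIdx (fun i => ι₂ i)

/-- A COD is decomposable if, after a permutation of its rows, it can be expressed as
the direct sum of two (nonempty) CODs on disjoint sets of indeterminates. -/
def IsDecomposable {p n k : ℕ} (G : Matrix (Fin p) (Fin n) (CODEntry k)) : Prop :=
  ∃ (σ : Equiv.Perm (Fin p)) (p₁ p₂ k₁ k₂ : ℕ) (hp : p = p₁ + p₂)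
    (G₁ : Matrix (Fin p₁) (Fin n) (CODEntry k₁))
    (G₂ : Matrix (Fin p₂) (Fin n) (CODEntry k₂))
    (ι₁ : Fin k₁ ↪ Fin k) (ι₂ : Fin k₂ ↪ Fin k),
    0 < p₁ ∧ 0 < p₂ ∧ IsCOD G₁ ∧ IsCOD G₂ ∧
    IsDirectSumOf hp (fun r c => G (σ r) c) G₁ G₂ ι₁ ι₂

/-- Rows `r₁` and `r₂` of `G` form a pair: if `r₁` is `(α₁,…,α_m, β₁,…,β_m)` then `r₂`
is `(±β₁^*,…,±β_m^*, ±α₁^*,…,±α_m^*)` (the signs may differ from entry to entry). -/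
def IsPairRows {p m k : ℕ} (G : Matrix (Fin p) (Fin (m + m)) (CODEntry k))
    (r₁ r₂ : Fin p) : Prop :=
  ∀ s : Fin m,
    (∃ b : Bool, G r₂ (Fin.castAdd m s) = CODEntry.negIf b ((G r₁ (Fin.natAdd m s)).conj)) ∧
    (∃ b : Bool, G r₂ (Fin.natAdd m s) = CODEntry.negIf b ((G r₁ (Fin.castAdd m s)).conj))


namespace CODEntry

variable {k : ℕ}

lemma neg_neg (e : CODEntry k) : e.neg.neg = e := by cases e <;> simp [neg]

lemma negIf_neg (b : Bool) (e : CODEntry k) :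
    (negIf b e).neg = negIf (!b) e := by
  cases b <;> simp [negIf, neg_neg]

lemma conj_neg (e : CODEntry k) : e.neg.conj = e.conj.neg := by cases e <;> simp [neg, conj]

lemma negIf_conj (b : Bool) (e : CODEntry k) :
    (negIf b e).conj = negIf b e.conj := by
  cases b <;> simp [negIf, conj_neg]

lemma ite_neg (c : Prop) [Decidable c] (e : CODEntry k) :
    (if c then e.neg else e) = negIf (decide c) e := by
  by_cases h : c <;> simp [h, negIf]

lemma exists_negIf_congr {x y : CODEntry k} (b₁ b₂ : Bool)
    (h : ∃ b, x = negIf b y) :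
    ∃ b, negIf b₁ x = negIf b (negIf b₂ y) := by
  obtain ⟨b, hb⟩ := h
  refine ⟨xor b₁ (xor b₂ b), ?_⟩
  subst hb
  cases b <;> cases b₁ <;> cases b₂ <;> simp [negIf, neg_neg]

lemma rename_conj (σ : Equiv.Perm (Fin k)) (e : CODEntry k) :
    (e.conj).rename σ = (e.rename σ).conj := by
  cases e <;> simp [conj, rename]

lemma rename_negIf (σ : Equiv.Perm (Fin k)) (b : Bool) (e : CODEntry k) :
    (negIf b e).rename σ = negIf b (e.rename σ) := by
  cases b <;> cases e <;> simp [negIf, neg, rename]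

lemma negVar_conj (j : Fin k) (e : CODEntry k) :
    (e.conj).negVar j = (e.negVar j).conj := by
  cases e <;> simp only [conj, negVar] <;> split <;> simp [conj]

lemma negVar_neg (j : Fin k) (e : CODEntry k) :
    e.neg.negVar j = (e.negVar j).neg := by
  cases e with
  | zero => rfl
  | var s c i => by_cases h : i = j <;> simp [h, neg, negVar]

lemma negVar_negIf (j : Fin k) (b : Bool) (e : CODEntry k) :
    (negIf b e).negVar j = negIf b (e.negVar j) := by
  cases b <;> simp [negIf, negVar_neg]

lemma conjVar_conj (j : Fin k) (e : CODEntry k) :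
    (e.conj).conjVar j = (e.conjVar j).conj := by
  cases e <;> simp only [conj, conjVar] <;> split <;> simp [conj]

lemma conjVar_neg (j : Fin k) (e : CODEntry k) :
    e.neg.conjVar j = (e.conjVar j).neg := by
  cases e with
  | zero => rfl
  | var s c i => by_cases h : i = j <;> simp [h, neg, conjVar]

lemma conjVar_negIf (j : Fin k) (b : Bool) (e : CODEntry k) :
    (negIf b e).conjVar j = negIf b (e.conjVar j) := by
  cases b <;> simp [negIf, conjVar_neg]

end CODEntry

lemma castAdd_ne_natAdd {m : ℕ} (a b : Fin m) :
    Fin.castAdd m a ≠ Fin.natAdd m b := by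
  intro h
  have := congrArg Fin.val h
  simp only [Fin.coe_castAdd, Fin.coe_natAdd] at this
  omega

private lemma pair_step {p m k : ℕ} (G : Matrix (Fin p) (Fin (m + m)) (CODEntry k))
    (r₁ r₂ : Fin p) (hpair : IsPairRows G r₁ r₂)
    (op : EquivOp p (m + m) k) (hop : op.ColumnRestricted) :
    IsPairRows (op.apply G) (op.rowMap r₁) (op.rowMap r₂) := by
  cases op with
  | rowPerm σ =>
      intro s
      simpa [EquivOp.apply, EquivOp.rowMap] using hpair s
  | rowNeg r₀ =>
      intro s
      obtain ⟨⟨b1, h1⟩, ⟨b2, h2⟩⟩ := hpair s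
      dsimp only [EquivOp.apply, EquivOp.rowMap, Equiv.Perm.one_apply]
      constructor
      · rw [CODEntry.ite_neg, CODEntry.ite_neg, CODEntry.negIf_conj]
        exact CODEntry.exists_negIf_congr _ _ ⟨b1, h1⟩
      · rw [CODEntry.ite_neg, CODEntry.ite_neg, CODEntry.negIf_conj]
        exact CODEntry.exists_negIf_congr _ _ ⟨b2, h2⟩
  | colPerm σ =>
      obtain ⟨i, rfl⟩ := hop
      intro s
      simp only [EquivOp.apply, EquivOp.rowMap, Equiv.Perm.one_apply]
      by_cases hs : s = i
      · subst hs
        rw [Equiv.swap_apply_left, Equiv.swap_apply_right]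
        exact ⟨(hpair s).2, (hpair s).1⟩
      · have h1 : Fin.castAdd m s ≠ Fin.castAdd m i := by
          intro h; exact hs (by simpa [Fin.ext_iff] using congrArg Fin.val h)
        have h2 : Fin.natAdd m s ≠ Fin.natAdd m i := by
          intro h
          have := congrArg Fin.val h
          simp only [Fin.coe_natAdd] at this
          exact hs (Fin.ext (by omega))
        rw [Equiv.swap_apply_of_ne_of_ne h1 (castAdd_ne_natAdd s i),
            Equiv.swap_apply_of_ne_of_ne (Ne.symm (castAdd_ne_natAdd i s)) h2]
        exact hpair s
  | colNeg c₀ =>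
      intro s
      obtain ⟨⟨b1, h1⟩, ⟨b2, h2⟩⟩ := hpair s
      simp only [EquivOp.apply, EquivOp.rowMap, Equiv.Perm.one_apply]
      constructor
      · rw [CODEntry.ite_neg, CODEntry.ite_neg, CODEntry.negIf_conj]
        exact CODEntry.exists_negIf_congr _ _ ⟨b1, h1⟩
      · rw [CODEntry.ite_neg, CODEntry.ite_neg, CODEntry.negIf_conj]
        exact CODEntry.exists_negIf_congr _ _ ⟨b2, h2⟩
  | varRename σ =>
      intro s
      obtain ⟨⟨b1, h1⟩, ⟨b2, h2⟩⟩ := hpair s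
      simp only [EquivOp.apply, EquivOp.rowMap, Equiv.Perm.one_apply]
      exact ⟨⟨b1, by rw [h1, CODEntry.rename_negIf, CODEntry.rename_conj]⟩,
             ⟨b2, by rw [h2, CODEntry.rename_negIf, CODEntry.rename_conj]⟩⟩
  | varNeg j =>
      intro s
      obtain ⟨⟨b1, h1⟩, ⟨b2, h2⟩⟩ := hpair s
      simp only [EquivOp.apply, EquivOp.rowMap, Equiv.Perm.one_apply]
      exact ⟨⟨b1, by rw [h1, CODEntry.negVar_negIf, CODEntry.negVar_conj]⟩,
             ⟨b2, by rw [h2, CODEntry.negVar_negIf, CODEntry.negVar_conj]⟩⟩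
  | varConj j =>
      intro s
      obtain ⟨⟨b1, h1⟩, ⟨b2, h2⟩⟩ := hpair s
      simp only [EquivOp.apply, EquivOp.rowMap, Equiv.Perm.one_apply]
      exact ⟨⟨b1, by rw [h1, CODEntry.conjVar_negIf, CODEntry.conjVar_conj]⟩,
             ⟨b2, by rw [h2, CODEntry.conjVar_negIf, CODEntry.conjVar_conj]⟩⟩

private lemma opsRowMap_foldl {p n k : ℕ} (ops : List (EquivOp p n k)) (τ : Equiv.Perm (Fin p)) :
    ops.foldl (fun τ op => op.rowMap * τ) τ = opsRowMap ops * τ := by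
  induction ops generalizing τ with
  | nil => simp [opsRowMap]
  | cons op ops ih =>
      simp only [List.foldl_cons, opsRowMap, ih (op.rowMap * τ), ih (op.rowMap * 1)]
      group

private lemma opsRowMap_cons {p n k : ℕ} (op : EquivOp p n k) (ops : List (EquivOp p n k)) :
    opsRowMap (op :: ops) = opsRowMap ops * op.rowMap := by
  have h : opsRowMap (op :: ops) = ops.foldl (fun τ o => o.rowMap * τ) (op.rowMap * 1) := rfl
  rw [h, opsRowMap_foldl, mul_one]

/-- column-restricted equivalence operations preserve pairs of rows:
if rows `r₁`, `r₂` of a BCOD form a pair, then after any finite sequence of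
column-restricted equivalence operations, the images of these two rows again form a pair. -/
theorem column_restricted_preserves_pairs {p m k : ℕ}
    (G : Matrix (Fin p) (Fin (m + m)) (CODEntry k)) (hG : IsBCOD G)
    (r₁ r₂ : Fin p) (hpair : IsPairRows G r₁ r₂)
    (ops : List (EquivOp p (m + m) k)) (hops : ∀ op ∈ ops, op.ColumnRestricted) :
    IsPairRows (applyOps G ops) (opsRowMap ops r₁) (opsRowMap ops r₂) := by
  clear hG
  induction ops generalizing G r₁ r₂ with
  | nil =>
      have h1 : opsRowMap ([] : List (EquivOp p (m + m) k)) = 1 := rfl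
      rw [h1]
      simpa [applyOps] using hpair
  | cons op ops ih =>
      have h1 := pair_step G r₁ r₂ hpair op (hops op List.mem_cons_self)
      have h2 := ih (op.apply G) _ _ h1 (fun o ho => hops o (List.mem_cons_of_mem _ ho))
      have e1 : applyOps G (op :: ops) = applyOps (op.apply G) ops := rfl
      rw [e1, opsRowMap_cons]
      simp only [Equiv.Perm.mul_apply]
      exact h2
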